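/- For every positive integer t and every ε > 0, there exists a constant C = C(t, ε) > 0 such that every bipartite graph G with vertex classes X and Y satisfying |X| ≥ C, |Y| ≥ C, and having at least ε|X||Y| edges contains a copy of the complete bipartite graph K_{t,t} (with t vertices in X and t vertices in Y). -/

import Mathlib

/-- **Proposition (bipartite Turán problems are degenerate).** For every `t ≥ 1` and `ε > 0`
there is `C = C(t, ε) > 0` such that every bipartite graph between classes `X` and `Y`
(modelled as a relation `E : Fin m → Fin k → Prop`) with `|X|, |Y| ≥ C` and at least
`ε|X||Y|` edges contains a copy of `K_{t,t}`. -/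
theorem statement7 (t : ℕ) (ht : 0 < t) (ε : ℝ) (hε : 0 < ε) :
    ∃ C : ℝ, 0 < C ∧
      ∀ (m k : ℕ) (E : Fin m → Fin k → Prop),
        C ≤ (m : ℝ) → C ≤ (k : ℝ) →
        ε * (m : ℝ) * (k : ℝ) ≤ (({p : Fin m × Fin k | E p.1 p.2}).ncard : ℝ) →
        ∃ (A : Finset (Fin m)) (B : Finset (Fin k)),
          A.card = t ∧ B.card = t ∧ ∀ a ∈ A, ∀ b ∈ B, E a b := by
  classical
  set δ : ℝ := min ε 1 with hδdef
  have hδ0 : 0 < δ := lt_min hε one_pos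
  have hδε : δ ≤ ε := min_le_left _ _
  refine ⟨2*t/δ*(4/δ)^t + 4*t/δ + 1, by positivity, ?_⟩
  intro m k E hm hk he
  set N : Fin k → Finset (Fin m) := fun y => Finset.univ.filter fun x => E x y with hN
  have hm0 : (0:ℝ) < m := lt_of_lt_of_le (by positivity) hm
  have hk0 : (0:ℝ) < k := lt_of_lt_of_le (by positivity) hk
  -- edge count as a sum of degrees
  have hset : {p : Fin m × Fin k | E p.1 p.2}
      = ↑(Finset.univ.filter fun p : Fin m × Fin k => E p.1 p.2) := by
    ext p; simp
  rw [hset, Set.ncard_coe_finset] at he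
  have hcount : (Finset.univ.filter fun p : Fin m × Fin k => E p.1 p.2).card
      = ∑ y : Fin k, (N y).card := by
    simp only [Finset.card_filter, hN]
    rw [Fintype.sum_prod_type]
    exact Finset.sum_comm
  rw [hcount] at he
  push_cast at he
  -- high degree vertices
  set Y₀ : Finset (Fin k) :=
    Finset.univ.filter (fun y => δ * m / 2 ≤ ((N y).card : ℝ)) with hY₀
  have hNy : ∀ y, ((N y).card : ℝ) ≤ m := by
    intro y
    exact_mod_cast le_trans (Finset.card_le_univ _) (le_of_eq (by simp))
  have hδmk : δ*m*k ≤ ∑ y : Fin k, ((N y).card : ℝ) :=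
    le_trans (mul_le_mul_of_nonneg_right
      (mul_le_mul_of_nonneg_right hδε hm0.le) hk0.le) he
  have hsplit : ∑ y : Fin k, ((N y).card : ℝ)
      = ∑ y ∈ Y₀, ((N y).card:ℝ)
        + ∑ y ∈ Finset.univ.filter (fun y => ¬ (δ * m / 2 ≤ ((N y).card : ℝ))),
            ((N y).card:ℝ) :=
    (Finset.sum_filter_add_sum_filter_not _ _ _).symm
  have hlowsum : ∑ y ∈ Finset.univ.filter (fun y => ¬ (δ * m / 2 ≤ ((N y).card : ℝ))),
      ((N y).card:ℝ) ≤ δ*m*k/2 := by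
    have hb : (((Finset.univ.filter (fun y : Fin k =>
        ¬ (δ * m / 2 ≤ ((N y).card : ℝ)))).card : ℝ)) ≤ k := by
      exact_mod_cast le_trans (Finset.card_le_univ _) (le_of_eq (by simp))
    calc ∑ y ∈ Finset.univ.filter (fun y => ¬ (δ * m / 2 ≤ ((N y).card : ℝ))),
          ((N y).card:ℝ)
        ≤ ∑ y ∈ Finset.univ.filter (fun y => ¬ (δ * m / 2 ≤ ((N y).card : ℝ))),
            (δ*m/2) :=
          Finset.sum_le_sum fun y hy =>
            le_of_lt (not_le.mp (Finset.mem_filter.mp hy).2)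
      _ = ((Finset.univ.filter (fun y : Fin k =>
            ¬ (δ * m / 2 ≤ ((N y).card : ℝ)))).card : ℝ) * (δ*m/2) := by
          rw [Finset.sum_const, nsmul_eq_mul]
      _ ≤ k * (δ*m/2) := mul_le_mul_of_nonneg_right hb (by positivity)
      _ = δ*m*k/2 := by ring
  have hY0sum : δ*m*k/2 ≤ ∑ y ∈ Y₀, ((N y).card:ℝ) := by linarith
  have hY0ub : ∑ y ∈ Y₀, ((N y).card:ℝ) ≤ (Y₀.card : ℝ) * m := by
    calc ∑ y ∈ Y₀, ((N y).card:ℝ) ≤ ∑ _y ∈ Y₀, (m:ℝ) :=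
          Finset.sum_le_sum fun y _ => hNy y
      _ = (Y₀.card : ℝ) * m := by rw [Finset.sum_const, nsmul_eq_mul]
  have hY0card : δ*k/2 ≤ (Y₀.card : ℝ) := by
    have h1 : δ*k/2*m ≤ (Y₀.card : ℝ)*m := by linarith
    exact le_of_mul_le_mul_right h1 hm0
  -- size bounds from C
  have hm4 : 4*t/δ ≤ (m:ℝ) := by
    refine le_trans ?_ hm
    have h1 : (0:ℝ) ≤ 2*t/δ*(4/δ)^t := by positivity
    linarith
  have hks : 2*t/δ*(4/δ)^t ≤ (k:ℝ) := by
    refine le_trans ?_ hk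
    have h1 : (0:ℝ) ≤ 4*t/δ := by positivity
    linarith
  have htm : (t:ℝ) ≤ δ*m/4 := by
    have h := (div_le_iff₀ hδ0).mp hm4
    linarith
  -- the degree threshold
  set D : ℕ := ⌈δ * m / 2⌉₊ with hD
  have hDge : δ*m/2 ≤ (D:ℝ) := Nat.le_ceil _
  have hDle : ∀ y ∈ Y₀, D ≤ (N y).card := fun y hy =>
    Nat.ceil_le.mpr (Finset.mem_filter.mp hy).2
  have hδm0 : (0:ℝ) ≤ δ*m := mul_nonneg hδ0.le hm0.le
  have htD : t ≤ D := by
    have h1 : (t:ℝ) ≤ (D:ℝ) := by linarith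
    exact_mod_cast h1
  have hDcast : ((D + 1 - t : ℕ) : ℝ) = (D:ℝ) + 1 - t := by
    have h1 : t ≤ D + 1 := htD.trans (Nat.le_succ _)
    push_cast [h1]
    ring
  have hD4 : δ*m/4 ≤ ((D + 1 - t : ℕ) : ℝ) := by
    rw [hDcast]; linarith
  -- contradiction setup
  by_contra hcon
  push_neg at hcon
  have key : ∀ S : Finset (Fin m), S.card = t →
      (Finset.univ.filter fun y => S ⊆ N y).card ≤ t - 1 := by
    intro S hS
    by_contra hFS
    push_neg at hFS
    have htc : t ≤ (Finset.univ.filter fun y => S ⊆ N y).card := by omega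
    obtain ⟨B, hBsub, hBcard⟩ := Finset.exists_subset_card_eq htc
    obtain ⟨a, ha, b, hb, hab⟩ := hcon S B hS hBcard
    have hbf := Finset.mem_filter.mp (hBsub hb)
    have := hbf.2 ha
    rw [hN] at this
    simp only [Finset.mem_filter, Finset.mem_univ, true_and] at this
    exact hab this
  -- double counting
  have hT1 : ∀ y : Fin k, ((N y).card).choose t
      = ((Finset.univ.powersetCard t).filter fun S => S ⊆ N y).card := by
    intro y
    rw [← Finset.card_powersetCard]
    congr 1
    ext S
    simp only [Finset.mem_powersetCard, Finset.mem_filter, Finset.subset_univ, true_and]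
    tauto
  have hswap : ∑ y ∈ Y₀, ((N y).card).choose t
      = ∑ S ∈ Finset.univ.powersetCard t, (Y₀.filter fun y => S ⊆ N y).card := by
    simp only [hT1, Finset.card_filter]
    exact Finset.sum_comm
  have hupper : ∑ y ∈ Y₀, ((N y).card).choose t ≤ (t-1) * m.choose t := by
    rw [hswap]
    calc ∑ S ∈ Finset.univ.powersetCard t, (Y₀.filter fun y => S ⊆ N y).card
        ≤ ∑ _S ∈ Finset.univ.powersetCard t, (t-1) := by
          apply Finset.sum_le_sum
          intro S hS
          have hScard : S.card = t := (Finset.mem_powersetCard.mp hS).2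
          calc (Y₀.filter fun y => S ⊆ N y).card
              ≤ (Finset.univ.filter fun y => S ⊆ N y).card :=
                Finset.card_le_card
                  (Finset.filter_subset_filter _ (Finset.subset_univ _))
            _ ≤ t - 1 := key S hScard
      _ = (t-1) * m.choose t := by
          rw [Finset.sum_const, smul_eq_mul, mul_comm]
          simp [Finset.card_powersetCard]
  have hlower : Y₀.card * (D.choose t) ≤ ∑ y ∈ Y₀, ((N y).card).choose t := by
    calc Y₀.card * (D.choose t) = Y₀.card • (D.choose t) := by rw [smul_eq_mul]
      _ ≤ ∑ y ∈ Y₀, ((N y).card).choose t :=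
          Finset.card_nsmul_le_sum Y₀ _ _ fun y hy =>
            Nat.choose_le_choose t (hDle y hy)
  have hfin : Y₀.card * D.descFactorial t ≤ (t-1) * m.descFactorial t := by
    rw [Nat.descFactorial_eq_factorial_mul_choose, Nat.descFactorial_eq_factorial_mul_choose]
    calc Y₀.card * (Nat.factorial t * D.choose t) = Nat.factorial t * (Y₀.card * D.choose t) := by ring
      _ ≤ Nat.factorial t * ((t-1) * m.choose t) :=
          Nat.mul_le_mul (le_refl _) (hlower.trans hupper)
      _ = (t-1) * (Nat.factorial t * m.choose t) := by ring
  have hnat : Y₀.card * (D + 1 - t)^t ≤ (t-1) * m ^ t :=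
    le_trans (Nat.mul_le_mul (le_refl _) (Nat.pow_sub_le_descFactorial D t))
      (hfin.trans (Nat.mul_le_mul (le_refl _) (Nat.descFactorial_le_pow m t)))
  have hreal : (Y₀.card : ℝ) * (((D + 1 - t : ℕ)) : ℝ)^t ≤ ((t-1 : ℕ):ℝ) * (m:ℝ)^t := by
    exact_mod_cast hnat
  -- real-number estimates
  have hone : ((4:ℝ)/δ)^t * (δ/4)^t = 1 := by
    rw [← mul_pow]
    have h1 : (4/δ) * (δ/4) = (1:ℝ) := by field_simp
    rw [h1, one_pow]
  have hkey : (t:ℝ) = (2*t/δ*(4/δ)^t) * (δ/2) * (δ/4)^t := by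
    have hne : δ ≠ 0 := ne_of_gt hδ0
    calc (t:ℝ) = (t:ℝ) * (((4:ℝ)/δ)^t * (δ/4)^t) := by rw [hone]; ring
      _ = (2*t/δ*(4/δ)^t) * (δ/2) * (δ/4)^t := by
          field_simp
  have ht' : (t:ℝ) ≤ (k:ℝ) * (δ/2) * (δ/4)^t := by
    rw [hkey]
    gcongr
  have chain : (t:ℝ) * (m:ℝ)^t ≤ ((t-1:ℕ):ℝ) * (m:ℝ)^t := by
    calc (t:ℝ) * (m:ℝ)^t ≤ ((k:ℝ) * (δ/2) * (δ/4)^t) * (m:ℝ)^t :=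
          mul_le_mul_of_nonneg_right ht' (by positivity)
      _ = (δ*k/2) * ((δ/4)*m)^t := by rw [mul_pow]; ring
      _ ≤ (Y₀.card:ℝ) * ((δ/4)*m)^t :=
          mul_le_mul_of_nonneg_right hY0card (by positivity)
      _ ≤ (Y₀.card:ℝ) * (((D + 1 - t : ℕ)) : ℝ)^t := by
          have h1 : (δ/4)*m ≤ (((D + 1 - t : ℕ)) : ℝ) := by linarith
          have h2 : (0:ℝ) ≤ (δ/4)*m := by positivity
          have h3 : (0:ℝ) ≤ (Y₀.card:ℝ) := Nat.cast_nonneg _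
          exact mul_le_mul_of_nonneg_left (pow_le_pow_left₀ h2 h1 t) h3
      _ ≤ ((t-1:ℕ):ℝ) * (m:ℝ)^t := hreal
  have hfinal : (t:ℝ) ≤ ((t-1:ℕ):ℝ) := le_of_mul_le_mul_right chain (pow_pos hm0 t)
  have : t ≤ t - 1 := by exact_mod_cast hfinal
  omega
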